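/- arXiv:2411.08084 — 6 statements merged into one kernel-verified Lean document; each statement's English description precedes it below -/
import Mathlib

section
/- Let f be the Collatz map, H a complex Hilbert space with orthonormal basis {e_n}_{n≥1}, and T the unique bounded operator on H with T e_n = e_{f(n)}. If there exists n ≥ 1 such that e_n is a cyclic vector for C*(T), then the Collatz conjecture holds, i.e. 1 ∈ orb(m;f) for every m ≥ 1. -/
/-- The Collatz map on positive integers: `3n+1` for odd `n`, `n/2` for even `n`. -/
def collatz (n : ℕ+) : ℕ+ :=
  if h : (n : ℕ) % 2 = 1 then 3 * n + 1
  else ⟨(n : ℕ) / 2, by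
    have h2 : 0 < n.1 := n.2
    have h3 : ¬ n.1 % 2 = 1 := h
    show 0 < n.1 / 2
    omega⟩

/-- The forward orbit of `x` under `f`. -/
def orbit {X : Type*} (f : X → X) (x : X) : Set X := Set.range fun k => f^[k] x

/-- The orbit equivalence relation induced by `f`: `x ~ y` iff the orbits meet. -/
def orbEquiv {X : Type*} (f : X → X) (x y : X) : Prop :=
  (orbit f x ∩ orbit f y).Nonempty

/-- The C*-algebra of operators generated by a set `S` of bounded operators on a complex
Hilbert space: the closure of the (non-unital) star subalgebra generated by `S`. -/
noncomputable def CstarGen {H : Type*} [NormedAddCommGroup H] [InnerProductSpace ℂ H]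
    [CompleteSpace H] (S : Set (H →L[ℂ] H)) : Set (H →L[ℂ] H) :=
  closure (NonUnitalStarAlgebra.adjoin ℂ S : Set (H →L[ℂ] H))

section Aux

lemma mem_orbit_iff {X : Type*} {f : X → X} {x p : X} : p ∈ orbit f x ↔ ∃ k, f^[k] x = p :=
  Iff.rfl

lemma self_mem_orbit {X : Type*} (f : X → X) (x : X) : x ∈ orbit f x := ⟨0, rfl⟩

lemma orbit_subset_of_mem {X : Type*} {f : X → X} {x y : X} (h : y ∈ orbit f x) :
    orbit f y ⊆ orbit f x := by
  rw [mem_orbit_iff] at h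
  obtain ⟨k, rfl⟩ := h
  intro z hz
  rw [mem_orbit_iff] at hz ⊢
  obtain ⟨j, rfl⟩ := hz
  exact ⟨j + k, by rw [Function.iterate_add_apply]⟩

lemma orbEquiv_self {X : Type*} (f : X → X) (x : X) : orbEquiv f x x :=
  ⟨x, self_mem_orbit f x, self_mem_orbit f x⟩

lemma orbEquiv_apply_right {X : Type*} (f : X → X) {x y : X} (h : orbEquiv f x y) :
    orbEquiv f x (f y) := by
  obtain ⟨p, hp1, hp2⟩ := h
  rw [mem_orbit_iff] at hp1 hp2
  obtain ⟨i, hi⟩ := hp1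
  obtain ⟨j, hj⟩ := hp2
  refine ⟨f p, mem_orbit_iff.2 ⟨i + 1, ?_⟩, mem_orbit_iff.2 ⟨j, ?_⟩⟩
  · rw [Function.iterate_succ_apply', hi]
  · rw [← Function.iterate_succ_apply, Function.iterate_succ_apply', hj]

lemma orbEquiv_of_apply_right {X : Type*} (f : X → X) {x y : X} (h : orbEquiv f x (f y)) :
    orbEquiv f x y := by
  obtain ⟨p, hp1, hp2⟩ := h
  rw [mem_orbit_iff] at hp2
  obtain ⟨j, hj⟩ := hp2
  exact ⟨p, hp1, mem_orbit_iff.2 ⟨j + 1, by rw [Function.iterate_succ_apply]; exact hj⟩⟩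

lemma collatz_one : collatz 1 = 4 := rfl
lemma collatz_two : collatz 2 = 1 := rfl
lemma collatz_four : collatz 4 = 2 := rfl

lemma iterate_one_mem (j : ℕ) : collatz^[j] 1 ∈ ({1, 2, 4} : Set ℕ+) := by
  induction j with
  | zero => simp
  | succ k ih =>
    rw [Function.iterate_succ_apply']
    rcases ih with h | h | h <;> rw [h] <;> simp [collatz_one, collatz_two, collatz_four]

lemma one_mem_orbit_of_124 {p : ℕ+} (hp : p ∈ ({1, 2, 4} : Set ℕ+)) :
    (1 : ℕ+) ∈ orbit collatz p := by
  rcases hp with h | h | h <;> subst h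
  · exact mem_orbit_iff.2 ⟨0, rfl⟩
  · exact mem_orbit_iff.2 ⟨1, collatz_two⟩
  · exact mem_orbit_iff.2 ⟨2, rfl⟩

/-- The key combinatorial step. -/
lemma one_mem_orbit_of_orbEquiv {n m : ℕ+} (h1 : orbEquiv collatz n 1)
    (hm : orbEquiv collatz n m) : (1 : ℕ+) ∈ orbit collatz m := by
  obtain ⟨p, hp1, hp2⟩ := h1
  obtain ⟨q, hq1, hq2⟩ := hm
  rw [mem_orbit_iff] at hp1 hp2 hq1
  obtain ⟨i, hpi⟩ := hp1
  obtain ⟨j, hpj⟩ := hp2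
  obtain ⟨a, hqa⟩ := hq1
  rcases le_total i a with hle | hle
  · have hq : q = collatz^[(a - i) + j] 1 := by
      rw [Function.iterate_add_apply, hpj, ← hpi, ← Function.iterate_add_apply, ← hqa]
      congr 1
      omega
    have h1q : (1 : ℕ+) ∈ orbit collatz q :=
      one_mem_orbit_of_124 (hq ▸ iterate_one_mem ((a - i) + j))
    exact orbit_subset_of_mem hq2 h1q
  · have hp : p = collatz^[i - a] q := by
      rw [← hqa, ← Function.iterate_add_apply, ← hpi]
      congr 1
      omega
    have hp124 : p ∈ ({1, 2, 4} : Set ℕ+) := by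
      rw [← hpj]; exact iterate_one_mem j
    have hpq : p ∈ orbit collatz q := mem_orbit_iff.2 ⟨i - a, hp.symm⟩
    have hpm : p ∈ orbit collatz m := orbit_subset_of_mem hq2 hpq
    exact orbit_subset_of_mem hpm (one_mem_orbit_of_124 hp124)

end Aux

section Hilbert

open scoped InnerProductSpace

variable {H : Type*} [NormedAddCommGroup H] [InnerProductSpace ℂ H]

/-- Map the topological closure of a span into a closed submodule. -/
lemma map_into (A : H →L[ℂ] H) (U : Set H) (V : Submodule ℂ H) (hV : IsClosed (V : Set H))
    (h : ∀ x ∈ U, A x ∈ V) :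
    ∀ x ∈ (Submodule.span ℂ U).topologicalClosure, A x ∈ V := by
  have hle : (Submodule.span ℂ U).topologicalClosure ≤ V.comap (A : H →ₗ[ℂ] H) := by
    apply Submodule.topologicalClosure_minimal
    · rw [Submodule.span_le]
      intro x hx
      exact h x hx
    · exact hV.preimage A.continuous
  exact fun x hx => hle hx

/-- A vector orthogonal to every basis vector is zero. -/
lemma eq_zero_of_inner_basis (b : HilbertBasis ℕ+ ℂ H) {x : H}
    (h : ∀ m : ℕ+, ⟪b m, x⟫_ℂ = 0) : x = 0 := by
  have hr : b.repr x = 0 := by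
    ext m
    rw [HilbertBasis.repr_apply_apply]
    simpa using h m
  simpa using congrArg b.repr.symm hr

/-- Everything in the closure of the span of a set orthogonal to `v` is orthogonal to `v`. -/
lemma inner_eq_zero_of_mem_closure (v : H) (U : Set H) (h : ∀ u ∈ U, ⟪v, u⟫_ℂ = 0) :
    ∀ w ∈ (Submodule.span ℂ U).topologicalClosure, ⟪v, w⟫_ℂ = 0 := by
  intro w hw
  have hker : (Submodule.span ℂ U).topologicalClosure ≤ LinearMap.ker (innerSL ℂ v : H →ₗ[ℂ] ℂ) := by
    apply Submodule.topologicalClosure_minimal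
    · rw [Submodule.span_le]
      intro u hu
      simpa [LinearMap.mem_ker] using h u hu
    · exact ContinuousLinearMap.isClosed_ker (innerSL ℂ v)
  simpa [LinearMap.mem_ker] using hker hw

end Hilbert

open scoped InnerProductSpace in
/-- If some basis vector `eₙ` is cyclic for `C*(T)`, the Collatz conjecture holds. -/
theorem collatz_of_cyclic_single {H : Type*} [NormedAddCommGroup H] [InnerProductSpace ℂ H]
    [CompleteSpace H] (b : HilbertBasis ℕ+ ℂ H)
    (T : H →L[ℂ] H) (hT : ∀ n : ℕ+, T (b n) = b (collatz n))
    (hcyc : ∃ n : ℕ+, closure ((fun A => A (b n)) '' CstarGen {T}) = Set.univ) :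
    ∀ m : ℕ+, (1 : ℕ+) ∈ orbit collatz m := by
  obtain ⟨n, hn⟩ := hcyc
  set e : ℕ+ → H := fun m => b m with he
  set S : Set ℕ+ := {m | orbEquiv collatz n m} with hS
  have hSf : ∀ m ∈ S, collatz m ∈ S := fun m hm => orbEquiv_apply_right collatz hm
  have hSf' : ∀ m : ℕ+, collatz m ∈ S → m ∈ S := fun m hm => orbEquiv_of_apply_right collatz hm
  set V : Submodule ℂ H := (Submodule.span ℂ (e '' S)).topologicalClosure with hV
  set W : Submodule ℂ H := (Submodule.span ℂ (e '' Sᶜ)).topologicalClosure with hW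
  have hVc : IsClosed (V : Set H) := Submodule.isClosed_topologicalClosure _
  have hWc : IsClosed (W : Set H) := Submodule.isClosed_topologicalClosure _
  have hbV : ∀ m ∈ S, e m ∈ V := fun m hm =>
    Submodule.le_topologicalClosure _ (Submodule.subset_span ⟨m, hm, rfl⟩)
  have hbW : ∀ m ∈ Sᶜ, e m ∈ W := fun m hm =>
    Submodule.le_topologicalClosure _ (Submodule.subset_span ⟨m, hm, rfl⟩)
  have horth : ∀ (s t : ℕ+), s ≠ t → ⟪e s, e t⟫_ℂ = 0 := fun s t hst => b.orthonormal.2 hst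
  -- generators of V are orthogonal to all of W
  have hgenW : ∀ s ∈ S, ∀ w ∈ W, ⟪e s, w⟫_ℂ = 0 := by
    intro s hs
    apply inner_eq_zero_of_mem_closure
    rintro u ⟨t, ht, rfl⟩
    exact horth s t (fun heq => ht (heq ▸ hs))
  have hgenV : ∀ t ∈ Sᶜ, ∀ v ∈ V, ⟪e t, v⟫_ℂ = 0 := by
    intro t ht
    apply inner_eq_zero_of_mem_closure
    rintro u ⟨s, hs, rfl⟩
    exact horth t s (fun heq => ht (heq ▸ hs))
  have hVW : ∀ v ∈ V, ∀ w ∈ W, ⟪v, w⟫_ℂ = 0 := by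
    intro v hv w hw
    have h2 : ∀ u ∈ e '' S, ⟪w, u⟫_ℂ = 0 := by
      rintro u ⟨s, hs, rfl⟩
      rw [← inner_conj_symm, hgenW s hs w hw, map_zero]
    have := inner_eq_zero_of_mem_closure w (e '' S) h2 v hv
    rw [← inner_conj_symm, this, map_zero]
  have hWV : ∀ w ∈ W, ∀ v ∈ V, ⟪w, v⟫_ℂ = 0 := fun w hw v hv => by
    rw [← inner_conj_symm, hVW v hv w hw, map_zero]
  have hVle : V ≤ Wᗮ := fun v hv => (Submodule.mem_orthogonal W v).2 fun w hw => hWV w hw v hv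
  have hWle : W ≤ Vᗮ := fun w hw => (Submodule.mem_orthogonal V w).2 fun v hv => hVW v hv w hw
  have hzero : ∀ x : H, (∀ v ∈ V, ⟪v, x⟫_ℂ = 0) → (∀ w ∈ W, ⟪w, x⟫_ℂ = 0) → x = 0 := by
    intro x hx1 hx2
    apply eq_zero_of_inner_basis b
    intro m
    by_cases hm : m ∈ S
    · exact hx1 _ (hbV m hm)
    · exact hx2 _ (hbW m hm)
  haveI : CompleteSpace V := hVc.completeSpace_coe
  haveI : CompleteSpace W := hWc.completeSpace_coe
  have hWoV : ∀ x ∈ Wᗮ, x ∈ V := by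
    intro x hx
    obtain ⟨y, hy, z, hz, hxyz⟩ := V.exists_add_mem_mem_orthogonal x
    have hzW : z ∈ Wᗮ := by
      have hzxy : z = x - y := by rw [hxyz]; abel
      rw [hzxy]
      exact Wᗮ.sub_mem hx (hVle hy)
    have hz0 : z = 0 :=
      hzero z ((Submodule.mem_orthogonal V z).1 hz) ((Submodule.mem_orthogonal W z).1 hzW)
    rw [hxyz, hz0, add_zero]
    exact hy
  have hVoW : ∀ x ∈ Vᗮ, x ∈ W := by
    intro x hx
    obtain ⟨y, hy, z, hz, hxyz⟩ := W.exists_add_mem_mem_orthogonal x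
    have hzV : z ∈ Vᗮ := by
      have hzxy : z = x - y := by rw [hxyz]; abel
      rw [hzxy]
      exact Vᗮ.sub_mem hx (hWle hy)
    have hz0 : z = 0 :=
      hzero z ((Submodule.mem_orthogonal V z).1 hzV) ((Submodule.mem_orthogonal W z).1 hz)
    rw [hxyz, hz0, add_zero]
    exact hy
  have hTV : ∀ v ∈ V, T v ∈ V := by
    apply map_into T (e '' S) V hVc
    rintro x ⟨m, hm, rfl⟩
    show T (b m) ∈ V
    rw [hT]
    exact hbV _ (hSf m hm)
  have hTW : ∀ w ∈ W, T w ∈ W := by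
    apply map_into T (e '' Sᶜ) W hWc
    rintro x ⟨m, hm, rfl⟩
    show T (b m) ∈ W
    rw [hT]
    exact hbW _ (fun hc => hm (hSf' m hc))
  have hadj : ∀ A ∈ NonUnitalStarAlgebra.adjoin ℂ ({T} : Set (H →L[ℂ] H)),
      (∀ v ∈ V, A v ∈ V) ∧ (∀ w ∈ W, A w ∈ W) := by
    intro A hA
    induction hA using NonUnitalStarAlgebra.adjoin_induction with
    | mem x hx =>
      rcases hx with rfl
      exact ⟨hTV, hTW⟩
    | add x y _ _ hx hy =>
      exact ⟨fun v hv => V.add_mem (hx.1 v hv) (hy.1 v hv),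
             fun w hw => W.add_mem (hx.2 w hw) (hy.2 w hw)⟩
    | zero =>
      exact ⟨fun v _ => by rw [ContinuousLinearMap.zero_apply]; exact V.zero_mem,
             fun w _ => by rw [ContinuousLinearMap.zero_apply]; exact W.zero_mem⟩
    | mul x y _ _ hx hy =>
      exact ⟨fun v hv => hx.1 _ (hy.1 v hv), fun w hw => hx.2 _ (hy.2 w hw)⟩
    | smul r x _ hx =>
      exact ⟨fun v hv => by rw [ContinuousLinearMap.smul_apply]; exact V.smul_mem r (hx.1 v hv),
             fun w hw => by rw [ContinuousLinearMap.smul_apply]; exact W.smul_mem r (hx.2 w hw)⟩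
    | star x _ hx =>
      constructor
      · intro v hv
        apply hWoV
        rw [Submodule.mem_orthogonal]
        intro w hw
        rw [ContinuousLinearMap.star_eq_adjoint, ContinuousLinearMap.adjoint_inner_right]
        exact hWV _ (hx.2 w hw) v hv
      · intro w hw
        apply hVoW
        rw [Submodule.mem_orthogonal]
        intro v hv
        rw [ContinuousLinearMap.star_eq_adjoint, ContinuousLinearMap.adjoint_inner_right]
        exact hVW _ (hx.1 v hv) w hw
  have hnS : n ∈ S := orbEquiv_self collatz n
  have himg : (fun A : H →L[ℂ] H => A (b n)) '' CstarGen {T} ⊆ (V : Set H) := by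
    rintro x ⟨A, hA, rfl⟩
    have hcont : Continuous fun B : H →L[ℂ] H => B (b n) :=
      (ContinuousLinearMap.apply ℂ H (b n)).continuous
    have hmem : A (b n) ∈ closure ((fun B : H →L[ℂ] H => B (b n)) ''
        (NonUnitalStarAlgebra.adjoin ℂ ({T} : Set (H →L[ℂ] H)) : Set (H →L[ℂ] H))) :=
      (image_closure_subset_closure_image hcont) ⟨A, hA, rfl⟩
    refine hVc.closure_subset_iff.2 ?_ hmem
    rintro y ⟨B, hB, rfl⟩
    exact (hadj B hB).1 _ (hbV n hnS)
  have hVuniv : ∀ x : H, x ∈ V := by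
    intro x
    have hx : x ∈ closure ((fun A : H →L[ℂ] H => A (b n)) '' CstarGen {T}) := by
      rw [hn]; trivial
    exact hVc.closure_subset_iff.2 himg hx
  have hall : ∀ m : ℕ+, m ∈ S := by
    intro m
    by_contra hm
    have h1 : e m ∈ W := hbW m hm
    have h2 : e m ∈ V := hVuniv _
    have h3 : ⟪e m, e m⟫_ℂ = 0 := hWV _ h1 _ h2
    rw [inner_self_eq_zero] at h3
    have hnorm := b.orthonormal.1 m
    rw [show b m = e m from rfl, h3, norm_zero] at hnorm
    exact one_ne_zero hnorm.symm
  intro m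
  exact one_mem_orbit_of_orbEquiv (hall 1) (hall m)
end

section
/- Let f be the Collatz map, H a complex Hilbert space with orthonormal basis {e_n}_{n≥1}, and T the unique bounded operator on H with T e_n = e_{f(n)}. If C*(T) has no non-trivial reducing subspaces (i.e. every closed subspace M ⊆ H with AM ⊆ M and A*M ⊆ M for all A ∈ C*(T) is {0} or H), then the Collatz conjecture holds. -/
local notation "⟪" x ", " y "⟫" => @inner ℂ _ _ x y

/-- If `C*(T)` has no non-trivial reducing subspaces, the Collatz conjecture holds. -/
theorem collatz_of_irreducible_single {H : Type*} [NormedAddCommGroup H]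
    [InnerProductSpace ℂ H] [CompleteSpace H] (b : HilbertBasis ℕ+ ℂ H)
    (T : H →L[ℂ] H) (hT : ∀ n : ℕ+, T (b n) = b (collatz n))
    (hirr : ∀ M : Submodule ℂ H, IsClosed (M : Set H) →
      (∀ A ∈ CstarGen {T}, ∀ x ∈ M, A x ∈ M ∧ ContinuousLinearMap.adjoint A x ∈ M) →
      M = ⊥ ∨ M = ⊤) :
    ∀ m : ℕ+, (1 : ℕ+) ∈ orbit collatz m := by
  classical
  -- the set of points whose orbit reaches 1
  set S : Set ℕ+ := {n | ∃ k, collatz^[k] n = 1} with hSdef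
  have hS_fwd : ∀ n, n ∈ S → collatz n ∈ S := by
    rintro n ⟨k, hk⟩
    match k, hk with
    | 0, hk =>
      simp only [Function.iterate_zero, id_eq] at hk
      subst hk
      exact ⟨2, by decide⟩
    | (k+1), hk =>
      exact ⟨k, by rwa [Function.iterate_succ_apply] at hk⟩
  have hS_bwd : ∀ n, collatz n ∈ S → n ∈ S := by
    rintro n ⟨k, hk⟩
    exact ⟨k + 1, by rwa [Function.iterate_succ_apply]⟩
  have h1S : (1 : ℕ+) ∈ S := ⟨0, rfl⟩
  -- the two closed spans
  let M : Submodule ℂ H := (Submodule.span ℂ (b '' S)).topologicalClosure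
  let M' : Submodule ℂ H := (Submodule.span ℂ (b '' Sᶜ)).topologicalClosure
  have hMclosed : IsClosed (M : Set H) := Submodule.isClosed_topologicalClosure _
  have hM'closed : IsClosed (M' : Set H) := Submodule.isClosed_topologicalClosure _
  have hmemM : ∀ n ∈ S, b n ∈ M := fun n hn =>
    Submodule.le_topologicalClosure _ (Submodule.subset_span ⟨n, hn, rfl⟩)
  have hmemM' : ∀ n ∈ Sᶜ, b n ∈ M' := fun n hn =>
    Submodule.le_topologicalClosure _ (Submodule.subset_span ⟨n, hn, rfl⟩)
  have hite : ∀ i j : ℕ+, ⟪b i, b j⟫ = if i = j then (1 : ℂ) else 0 :=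
    orthonormal_iff_ite.mp b.orthonormal
  -- M' ≤ Mᗮ
  have hM'le : M' ≤ Mᗮ := by
    apply Submodule.topologicalClosure_minimal
    · rw [Submodule.span_le]
      rintro _ ⟨n, hn, rfl⟩
      rw [SetLike.mem_coe, Submodule.mem_orthogonal']
      intro u hu
      have : M ≤ LinearMap.ker (innerSL ℂ (b n) : H →ₗ[ℂ] ℂ) := by
        apply Submodule.topologicalClosure_minimal
        · rw [Submodule.span_le]
          rintro _ ⟨m, hm, rfl⟩
          simp only [SetLike.mem_coe, LinearMap.mem_ker, ContinuousLinearMap.coe_coe,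
            innerSL_apply_apply]
          rw [hite n m, if_neg]
          rintro rfl; exact hn hm
        · exact ContinuousLinearMap.isClosed_ker (innerSL ℂ (b n))
      have := this hu
      simpa using this
    · exact Submodule.isClosed_orthogonal M
  -- Mᗮ ≤ M'
  have hMole : Mᗮ ≤ M' := by
    intro x hx
    haveI : CompleteSpace M' := hM'closed.completeSpace_coe
    rw [← Submodule.orthogonal_orthogonal M', Submodule.mem_orthogonal]
    intro y hy
    rw [← b.tsum_inner_mul_inner y x]
    have hz : ∀ n : ℕ+, ⟪y, b n⟫ * ⟪b n, x⟫ = 0 := by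
      intro n
      by_cases hn : n ∈ S
      · have : ⟪b n, x⟫ = 0 := (Submodule.mem_orthogonal M x).mp hx _ (hmemM n hn)
        rw [this, mul_zero]
      · have h0 : ⟪b n, y⟫ = 0 := (Submodule.mem_orthogonal M' y).mp hy _ (hmemM' n hn)
        have hy0 : ⟪y, b n⟫ = 0 := by
          have := congrArg (starRingEnd ℂ) h0
          simpa using this
        rw [hy0, zero_mul]
    rw [tsum_congr hz, tsum_zero]
  -- general invariance under an operator mapping basis generators into the set
  have hinv : ∀ (A : H →L[ℂ] H) (W : Set ℕ+), (∀ n ∈ W, ∃ n' ∈ W, A (b n) = b n') →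
      ∀ x ∈ (Submodule.span ℂ (b '' W)).topologicalClosure,
        A x ∈ (Submodule.span ℂ (b '' W)).topologicalClosure := by
    intro A W hA
    have h : (Submodule.span ℂ (b '' W)).topologicalClosure ≤
        Submodule.comap (A : H →ₗ[ℂ] H) (Submodule.span ℂ (b '' W)).topologicalClosure := by
      apply Submodule.topologicalClosure_minimal
      · rw [Submodule.span_le]
        rintro _ ⟨n, hn, rfl⟩
        obtain ⟨n', hn', h'⟩ := hA n hn
        simp only [SetLike.mem_coe, Submodule.mem_comap, ContinuousLinearMap.coe_coe, h']
        exact Submodule.le_topologicalClosure _ (Submodule.subset_span ⟨n', hn', rfl⟩)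
      · exact (Submodule.isClosed_topologicalClosure _).preimage A.continuous
    exact fun x hx => h hx
  have hTM : ∀ x ∈ M, T x ∈ M := by
    refine hinv T S (fun n hn => ⟨collatz n, hS_fwd n hn, hT n⟩)
  have hTM' : ∀ x ∈ M', T x ∈ M' := by
    refine hinv T Sᶜ (fun n hn => ⟨collatz n, fun hc => hn (hS_bwd n hc), hT n⟩)
  have hTstarM : ∀ x ∈ M, ContinuousLinearMap.adjoint T x ∈ M := by
    intro x hx
    haveI : CompleteSpace M := hMclosed.completeSpace_coe
    rw [← Submodule.orthogonal_orthogonal M, Submodule.mem_orthogonal]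
    intro y hy
    rw [ContinuousLinearMap.adjoint_inner_right]
    have hTy : T y ∈ Mᗮ := hM'le (hTM' y (hMole hy))
    have h0 : ⟪x, T y⟫ = 0 := (Submodule.mem_orthogonal M (T y)).mp hTy x hx
    have := congrArg (starRingEnd ℂ) h0
    simpa using this
  -- the set of operators reducing M
  set P : Set (H →L[ℂ] H) :=
    {A | ∀ x ∈ M, A x ∈ M ∧ ContinuousLinearMap.adjoint A x ∈ M} with hPdef
  have hPclosed : IsClosed P := by
    have : P = ⋂ (x : M), ({A : H →L[ℂ] H | A x ∈ M} ∩
        {A : H →L[ℂ] H | ContinuousLinearMap.adjoint A x ∈ M}) := by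
      ext A
      constructor
      · intro hA
        rw [Set.mem_iInter]
        rintro ⟨x, hx⟩
        exact ⟨(hA x hx).1, (hA x hx).2⟩
      · intro hA x hx
        have := Set.mem_iInter.mp hA ⟨x, hx⟩
        exact ⟨this.1, this.2⟩
    rw [this]
    refine isClosed_iInter fun x => IsClosed.inter ?_ ?_
    · exact hMclosed.preimage (ContinuousLinearMap.apply ℂ H (x : H)).continuous
    · exact hMclosed.preimage
        ((ContinuousLinearMap.apply ℂ H (x : H)).continuous.comp
          (ContinuousLinearMap.adjoint (𝕜 := ℂ) (E := H) (F := H)).continuous)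
  have hTP : T ∈ P := fun x hx => ⟨hTM x hx, hTstarM x hx⟩
  have hadjP : (NonUnitalStarAlgebra.adjoin ℂ {T} : Set (H →L[ℂ] H)) ⊆ P := by
    intro A hA
    induction hA using NonUnitalStarAlgebra.adjoin_induction with
    | mem x hx =>
      rw [Set.mem_singleton_iff] at hx
      subst hx; exact hTP
    | add x y hx hy hx' hy' =>
      intro u hu
      obtain ⟨h1, h2⟩ := hx' u hu
      obtain ⟨h3, h4⟩ := hy' u hu
      constructor
      · simpa using M.add_mem h1 h3
      · rw [map_add]
        simpa using M.add_mem h2 h4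
    | zero =>
      intro u hu
      constructor
      · simp only [ContinuousLinearMap.zero_apply]
        exact M.zero_mem
      · rw [map_zero]
        simp only [ContinuousLinearMap.zero_apply]
        exact M.zero_mem
    | mul x y hx hy hx' hy' =>
      intro u hu
      constructor
      · exact (hx' _ ((hy' u hu).1)).1
      · rw [ContinuousLinearMap.mul_def, ContinuousLinearMap.adjoint_comp,
          ContinuousLinearMap.comp_apply]
        exact (hy' _ ((hx' u hu).2)).2
    | smul r x hx hx' =>
      intro u hu
      constructor
      · simpa using M.smul_mem r ((hx' u hu).1)
      · have hsm : ContinuousLinearMap.adjoint (r • x) =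
            (starRingEnd ℂ) r • ContinuousLinearMap.adjoint x :=
          map_smulₛₗ (ContinuousLinearMap.adjoint :
            (H →L[ℂ] H) ≃ₗᵢ⋆[ℂ] (H →L[ℂ] H)) r x
        rw [hsm]
        simpa using M.smul_mem _ ((hx' u hu).2)
    | star x hx hx' =>
      intro u hu
      obtain ⟨h1, h2⟩ := hx' u hu
      constructor
      · rw [ContinuousLinearMap.star_eq_adjoint]
        exact h2
      · rw [ContinuousLinearMap.star_eq_adjoint, ContinuousLinearMap.adjoint_adjoint]
        exact h1
  have hCP : CstarGen {T} ⊆ P := by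
    unfold CstarGen
    exact closure_minimal hadjP hPclosed
  -- apply irreducibility
  have := hirr M hMclosed (fun A hA x hx => hCP hA x hx)
  have hb1 : ‖b (1 : ℕ+)‖ = 1 := b.orthonormal.1 1
  have hMne : M ≠ ⊥ := by
    intro h
    have : b (1 : ℕ+) ∈ M := hmemM 1 h1S
    rw [h, Submodule.mem_bot] at this
    rw [this, norm_zero] at hb1
    norm_num at hb1
  have hMtop : M = ⊤ := this.resolve_left hMne
  intro m
  by_cases hm : m ∈ S
  · obtain ⟨k, hk⟩ := hm
    exact ⟨k, hk⟩
  · exfalso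
    have h1 : b m ∈ M := by rw [hMtop]; trivial
    have h2 : b m ∈ Mᗮ := hM'le (hmemM' m hm)
    have : b m = 0 := by
      have := (Submodule.mem_orthogonal M (b m)).mp h2 (b m) h1
      rw [inner_self_eq_zero] at this
      exact this
    have hbm : ‖b m‖ = 1 := b.orthonormal.1 m
    rw [this, norm_zero] at hbm
    norm_num at hbm
end

section
/- Let H be a complex Hilbert space with orthonormal basis {e_n}_{n≥1}, and T1, T2 the bounded operators with T1 e_n = e_{3n+1} for n odd, T1 e_n = 0 for n even, T2 e_n = e_{n/2} for n even, T2 e_n = 0 for n odd. If Q ∈ B(H) is an orthogonal projection lying in the commutant C*(T1,T2)' (i.e. Q commutes with T1 and T2), then Q e_1 = 0 or Q e_1 = e_1. -/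
local notation "⟪" x ", " y "⟫" => @inner ℂ _ _ x y

/-- A "predecessor" map: `pre m = max 1 (m/3)` as a positive natural. -/
def preC (m : ℕ+) : ℕ+ := ⟨max 1 ((m : ℕ) / 3), lt_of_lt_of_le one_pos (le_max_left _ _)⟩

/-- Any orthogonal projection in the commutant of `C*(T₁,T₂)` maps `e₁` to `0` or `e₁`. -/
theorem projection_commutant_pair {H : Type*} [NormedAddCommGroup H] [InnerProductSpace ℂ H]
    [CompleteSpace H] (b : HilbertBasis ℕ+ ℂ H)
    (T1 T2 : H →L[ℂ] H)
    (hT1 : ∀ n : ℕ+, T1 (b n) = if (n : ℕ) % 2 = 1 then b (3 * n + 1) else 0)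
    (hT2 : ∀ n : ℕ+, T2 (b n) = if (n : ℕ) % 2 = 0 then b (collatz n) else 0)
    (Q : H →L[ℂ] H) (hQidem : Q * Q = Q) (hQsa : ContinuousLinearMap.adjoint Q = Q)
    (hQcomm : ∀ A ∈ CstarGen {T1, T2}, Q * A = A * Q) :
    Q (b 1) = 0 ∨ Q (b 1) = b 1 := by
  classical
  -- Q commutes with T1 and T2
  have hQT1 : ∀ z, Q (T1 z) = T1 (Q z) := by
    intro z
    have h := hQcomm T1 (subset_closure (NonUnitalStarAlgebra.subset_adjoin ℂ _ (by simp)))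
    simpa using congrArg (fun A => A z) h
  have hQT2 : ∀ z, Q (T2 z) = T2 (Q z) := by
    intro z
    have h := hQcomm T2 (subset_closure (NonUnitalStarAlgebra.subset_adjoin ℂ _ (by simp)))
    simpa using congrArg (fun A => A z) h
  -- extensionality with respect to the basis
  have hext : ∀ v w : H, (∀ i, ⟪b i, v⟫ = ⟪b i, w⟫) → v = w := by
    intro v w h
    apply b.repr.injective
    apply lp.ext
    funext i
    rw [b.repr_apply_apply, b.repr_apply_apply]
    exact h i
  have hortho : ∀ i j : ℕ+, ⟪b i, b j⟫ = if i = j then (1:ℂ) else 0 :=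
    orthonormal_iff_ite.mp b.orthonormal
  -- adjoint of T2 on basis vectors
  have hT2adj : ∀ m : ℕ+, ContinuousLinearMap.adjoint T2 (b m) = b (2 * m) := by
    intro m
    apply hext
    intro n
    rw [ContinuousLinearMap.adjoint_inner_right, hT2 n, hortho]
    by_cases hn : (n : ℕ) % 2 = 0
    · rw [if_pos hn, hortho]
      have hiff : (collatz n = m) ↔ (n = 2 * m) := by
        rw [← PNat.coe_inj, ← PNat.coe_inj]
        have hcol : ((collatz n : ℕ+) : ℕ) = (n : ℕ) / 2 := by
          unfold collatz
          split_ifs with h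
          · omega
          · exact congrArg PNat.val (dif_neg h)
        simp only [hcol, PNat.mul_coe, PNat.val_ofNat]
        omega
      simp [hiff]
    · rw [if_neg hn]
      have : n ≠ 2 * m := by
        intro h
        rw [h] at hn
        rw [PNat.mul_coe, PNat.val_ofNat] at hn
        omega
      simp [this]
  have hT1adj : ∀ m : ℕ+, ContinuousLinearMap.adjoint T1 (b m)
      = if (m : ℕ) % 6 = 4 then b (preC m) else 0 := by
    intro m
    apply hext
    intro n
    rw [ContinuousLinearMap.adjoint_inner_right, hT1 n]
    by_cases hn : (n : ℕ) % 2 = 1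
    · rw [if_pos hn, hortho]
      by_cases hm : (m : ℕ) % 6 = 4
      · rw [if_pos hm, hortho]
        have hiff : (3 * n + 1 = m) ↔ (n = preC m) := by
          rw [← PNat.coe_inj, ← PNat.coe_inj]
          have h1 : ((3 * n + 1 : ℕ+) : ℕ) = 3 * (n : ℕ) + 1 := by push_cast; ring
          have h2 : ((preC m : ℕ+) : ℕ) = max 1 ((m : ℕ) / 3) := rfl
          rw [h1, h2]
          have hn1 : 1 ≤ (n : ℕ) := n.2
          omega
        simp [hiff]
      · rw [if_neg hm]
        have : 3 * n + 1 ≠ m := by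
          intro h
          apply hm
          rw [← h]
          have h1 : ((3 * n + 1 : ℕ+) : ℕ) = 3 * (n : ℕ) + 1 := by push_cast; ring
          omega
        simp [this]
    · rw [if_neg hn]
      by_cases hm : (m : ℕ) % 6 = 4
      · rw [if_pos hm, hortho]
        have : n ≠ preC m := by
          intro h
          apply hn
          have h2 : ((preC m : ℕ+) : ℕ) = max 1 ((m : ℕ) / 3) := rfl
          have := congrArg (fun k : ℕ+ => (k : ℕ)) h
          simp only [h2] at this
          omega
        simp [this, inner_zero_left]
      · simp [hm, inner_zero_left]
  set x : H := Q (b 1) with hx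
  set c : ℕ+ → ℂ := fun m => ⟪b m, x⟫ with hc
  -- the fixed point equation
  have hb14 : T1 (b 1) = b 4 := by
    rw [hT1]
    have : (3 * (1:ℕ+) + 1 : ℕ+) = 4 := by decide
    rw [if_pos (by norm_num), this]
  have hfix : T2 (T2 (T1 x)) = x := by
    have h4 : T2 (b 4) = b 2 := by
      rw [hT2]
      have : collatz 4 = 2 := by decide
      rw [if_pos (by norm_num), this]
    have h2 : T2 (b 2) = b 1 := by
      rw [hT2]
      have : collatz 2 = 1 := by decide
      rw [if_pos (by norm_num), this]
    calc T2 (T2 (T1 (Q (b 1)))) = Q (T2 (T2 (T1 (b 1)))) := by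
          rw [hQT2, hQT2, hQT1]
      _ = Q (b 1) := by rw [hb14, h4, h2]
  -- the key recursion for coefficients
  have hstep : ∀ m : ℕ+, c m = if (m : ℕ) % 3 = 1 then c (preC (4 * m)) else 0 := by
    intro m
    have h1 : c m = ⟪ContinuousLinearMap.adjoint T1 (b (4 * m)), x⟫ := by
      calc c m = ⟪b m, T2 (T2 (T1 x))⟫ := by rw [hfix]
        _ = ⟪ContinuousLinearMap.adjoint T2 (b m), T2 (T1 x)⟫ :=
            (ContinuousLinearMap.adjoint_inner_left _ _ _).symm
        _ = ⟪b (2 * m), T2 (T1 x)⟫ := by rw [hT2adj]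
        _ = ⟪ContinuousLinearMap.adjoint T2 (b (2 * m)), T1 x⟫ :=
            (ContinuousLinearMap.adjoint_inner_left _ _ _).symm
        _ = ⟪b (4 * m), T1 x⟫ := by
            rw [hT2adj]
            have h22 : (2 * (2 * m) : ℕ+) = 4 * m := by
              rw [← mul_assoc]
              congr 1
            rw [h22]
        _ = ⟪ContinuousLinearMap.adjoint T1 (b (4 * m)), x⟫ :=
            (ContinuousLinearMap.adjoint_inner_left _ _ _).symm
    rw [h1, hT1adj]
    have hcond : ((4 * m : ℕ+) : ℕ) % 6 = 4 ↔ (m : ℕ) % 3 = 1 := by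
      rw [PNat.mul_coe, PNat.val_ofNat]
      omega
    by_cases hm : (m : ℕ) % 3 = 1
    · rw [if_pos (hcond.mpr hm), if_pos hm]
    · rw [if_neg (fun h => hm (hcond.mp h)), if_neg hm]
      simp
  -- growth of the index
  have hgrow : ∀ m : ℕ+, (m : ℕ) % 3 = 1 → 2 ≤ (m : ℕ) → (m : ℕ) < ((preC (4 * m)) : ℕ) := by
    intro m h3 h2
    have h : ((preC (4 * m)) : ℕ) = max 1 (((4 * m : ℕ+) : ℕ) / 3) := rfl
    rw [h, PNat.mul_coe, PNat.val_ofNat]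
    omega
  -- chain of equal coefficients with growing indices
  have hchain : ∀ k : ℕ, ∀ m : ℕ+, 2 ≤ (m : ℕ) → c m ≠ 0 →
      ∃ m' : ℕ+, (m : ℕ) + k ≤ (m' : ℕ) ∧ c m' = c m := by
    intro k
    induction k with
    | zero => exact fun m _ _ => ⟨m, by omega, rfl⟩
    | succ k ih =>
      intro m hm hcm
      obtain ⟨m', hm', hcm'⟩ := ih m hm hcm
      have hcm'ne : c m' ≠ 0 := by rw [hcm']; exact hcm
      have h3 : (m' : ℕ) % 3 = 1 := by
        by_contra h
        exact hcm'ne (by rw [hstep m', if_neg h])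
      have hm'2 : 2 ≤ (m' : ℕ) := by omega
      refine ⟨preC (4 * m'), ?_, ?_⟩
      · have := hgrow m' h3 hm'2
        omega
      · rw [hstep m', if_pos h3] at hcm'
        exact hcm'
  -- all coefficients away from 1 vanish
  have hczero : ∀ m : ℕ+, 2 ≤ (m : ℕ) → c m = 0 := by
    intro m hm
    by_contra hcm
    -- the set of indices with the same coefficient is infinite
    have hSinf : {i : ℕ+ | c i = c m}.Infinite := by
      intro hfin
      obtain ⟨N, hN⟩ := hfin.bddAbove
      obtain ⟨m', hm', hcm'⟩ := hchain (N : ℕ) m hm hcm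
      have : m' ≤ N := hN hcm'
      have : (m' : ℕ) ≤ (N : ℕ) := this
      omega
    have hsum : Summable (fun i : ℕ+ => ‖b.repr x i‖ ^ (2:ℝ)) := by
      have := (lp.memℓp (b.repr x)).summable (p := 2) (by norm_num)
      simpa using this
    have htend := hsum.tendsto_cofinite_zero
    have hfreq : ∃ᶠ i in Filter.cofinite, ‖b.repr x i‖ ^ (2:ℝ) = ‖c m‖ ^ (2:ℝ) := by
      rw [Filter.frequently_cofinite_iff_infinite]
      apply hSinf.mono
      intro i hi
      simp only [Set.mem_setOf_eq] at hi ⊢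
      have hri : b.repr x i = c i := b.repr_apply_apply x i
      rw [hri, hi]
    have hne : (0:ℝ) ≠ ‖c m‖ ^ (2:ℝ) := by
      have : ‖c m‖ ≠ 0 := norm_ne_zero_iff.mpr hcm
      positivity
    have := (hfreq.and_eventually (htend.eventually_ne hne)).exists
    obtain ⟨i, h1, h2⟩ := this
    exact h2 h1
  -- hence x = c 1 • b 1
  have hxc : x = c 1 • b 1 := by
    apply hext
    intro i
    rw [inner_smul_right, hortho]
    have hcieq : ⟪b i, x⟫ = c i := rfl
    rw [hcieq]
    rcases eq_or_ne i 1 with rfl | hi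
    · simp
    · have hi2 : 2 ≤ (i : ℕ) := by
        have h1 : (i : ℕ) ≠ 1 := by
          rw [← PNat.one_coe, Ne, PNat.coe_inj]
          exact hi
        exact Nat.lt_of_le_of_ne i.2 (Ne.symm h1)
      rw [hczero i hi2]
      simp [hi]
  -- finish using idempotency
  have hQx : Q x = x := by
    conv_lhs => rw [hx, ← ContinuousLinearMap.mul_apply, hQidem]
  have hb1 : b 1 ≠ 0 := b.orthonormal.ne_zero 1
  have h5 : (c 1 * c 1) • b 1 = c 1 • b 1 := by
    have h6 : Q x = (c 1 * c 1) • b 1 := by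
      rw [hxc, map_smul, ← hx, hxc, smul_smul]
    rw [← h6, hQx, hxc]
  have h8 : c 1 * c 1 - c 1 = 0 := by
    have h9 : (c 1 * c 1 - c 1) • b 1 = 0 := by rw [sub_smul, h5, sub_self]
    rcases smul_eq_zero.mp h9 with h | h
    · exact h
    · exact absurd h hb1
  rcases mul_eq_zero.mp (show c 1 * (c 1 - 1) = 0 by linear_combination h8) with h | h
  · left
    rw [hx] at hxc ⊢
    rw [hxc, h, zero_smul]
  · right
    rw [hx] at hxc ⊢
    rw [hxc, sub_eq_zero.mp h, one_smul]
end

section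
/- Let f be the Collatz map, H a complex Hilbert space with orthonormal basis {e_n}_{n≥1}, and T1, T2 the bounded operators with T1 e_n = e_{3n+1} for n odd, T1 e_n = 0 for n even, T2 e_n = e_{n/2} for n even, T2 e_n = 0 for n odd. If the Collatz conjecture holds, then C*(T1,T2) has no non-trivial reducing subspaces. -/
namespace CollatzAux

open ContinuousLinearMap

local notation "⟪" x ", " y "⟫" => @inner ℂ _ _ x y

variable {H : Type*} [NormedAddCommGroup H] [InnerProductSpace ℂ H] [CompleteSpace H]

lemma basis_ext (b : HilbertBasis ℕ+ ℂ H) {v w : H}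
    (h : ∀ i : ℕ+, ⟪b i, v⟫ = ⟪b i, w⟫) : v = w := by
  apply b.repr.injective
  ext i
  rw [b.repr_apply_apply, b.repr_apply_apply]
  exact h i

lemma inner_basis (b : HilbertBasis ℕ+ ℂ H) (i j : ℕ+) :
    ⟪b i, b j⟫ = if i = j then 1 else 0 :=
  orthonormal_iff_ite.mp b.orthonormal i j

lemma collatz_odd {n : ℕ+} (h : (n : ℕ) % 2 = 1) : collatz n = 3 * n + 1 := by
  unfold collatz; exact dif_pos h

lemma collatz_even_coe {n : ℕ+} (h : (n : ℕ) % 2 = 0) : ((collatz n : ℕ+) : ℕ) = (n : ℕ) / 2 := by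
  unfold collatz; exact congrArg PNat.val (dif_neg (show ¬ (n : ℕ) % 2 = 1 by omega))

lemma coe31 (n : ℕ+) : ((3 * n + 1 : ℕ+) : ℕ) = 3 * (n : ℕ) + 1 := by
  simp [PNat.mul_coe, PNat.add_coe, PNat.one_coe]

lemma two_mul_collatz {n : ℕ+} (h : (n : ℕ) % 2 = 0) : 2 * collatz n = n := by
  apply PNat.coe_injective
  rw [PNat.mul_coe, collatz_even_coe h]
  have h2 : (0 : ℕ) < (n : ℕ) := n.2
  have e2 : ((2:ℕ+):ℕ) = 2 := rfl
  rw [e2]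
  omega

variable (b : HilbertBasis ℕ+ ℂ H) (T1 T2 : H →L[ℂ] H)
variable (hT1 : ∀ n : ℕ+, T1 (b n) = if (n : ℕ) % 2 = 1 then b (3 * n + 1) else 0)
variable (hT2 : ∀ n : ℕ+, T2 (b n) = if (n : ℕ) % 2 = 0 then b (collatz n) else 0)

include hT2 in
lemma adj2 (m : ℕ+) : adjoint T2 (b m) = b (2 * m) := by
  apply basis_ext b; intro i
  rw [adjoint_inner_right, hT2 i, inner_basis]
  by_cases hi : (i : ℕ) % 2 = 0
  · rw [if_pos hi, inner_basis]
    have hiff : collatz i = m ↔ i = 2 * m := by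
      constructor
      · intro h; rw [← h, two_mul_collatz hi]
      · intro h; subst h
        exact mul_left_cancel (two_mul_collatz hi)
    simp [hiff]
  · rw [if_neg hi, inner_zero_left, if_neg]
    intro h
    apply hi
    rw [h, PNat.mul_coe, show ((2:ℕ+):ℕ) = 2 from rfl]
    omega

include hT1 in
lemma adj1 (n : ℕ+) (h : (n : ℕ) % 2 = 1) : adjoint T1 (b (3 * n + 1)) = b n := by
  apply basis_ext b; intro i
  rw [adjoint_inner_right, hT1 i, inner_basis]
  by_cases hi : (i : ℕ) % 2 = 1
  · rw [if_pos hi, inner_basis]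
    have hiff : (3 * i + 1 : ℕ+) = 3 * n + 1 ↔ i = n := by
      constructor
      · intro hh
        apply PNat.coe_injective
        have := congrArg PNat.val hh
        rw [show ((3*i+1:ℕ+)).val = 3 * (i:ℕ) + 1 from coe31 i,
          show ((3*n+1:ℕ+)).val = 3 * (n:ℕ) + 1 from coe31 n] at this
        omega
      · rintro rfl; rfl
    simp [hiff]
  · rw [if_neg hi, inner_zero_left, if_neg]
    intro hh
    exact hi (hh ▸ h)

lemma opnorm_le_one (T : H →L[ℂ] H)
    (hE : (adjoint T ∘L T) ∘L (adjoint T ∘L T) = adjoint T ∘L T) : ‖T‖ ≤ 1 := by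
  set E := adjoint T ∘L T with hEdef
  have h1 : ‖E‖ = ‖T‖ * ‖T‖ := norm_adjoint_comp_self T
  have hEa : adjoint E = E := by rw [hEdef, adjoint_comp, adjoint_adjoint]
  have h2 : ‖E‖ * ‖E‖ = ‖E‖ := by
    calc ‖E‖ * ‖E‖ = ‖adjoint E ∘L E‖ := (norm_adjoint_comp_self E).symm
    _ = ‖E ∘L E‖ := by rw [hEa]
    _ = ‖E‖ := by rw [hE]
  have hE1 : ‖E‖ ≤ 1 := by nlinarith [norm_nonneg E]
  nlinarith [norm_nonneg T]

lemma dense_span' : Dense (↑(Submodule.span ℂ (Set.range ⇑b)) : Set H) := by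
  rw [dense_iff_closure_eq, ← Submodule.topologicalClosure_coe, b.dense_span,
    Submodule.top_coe]

include hT1 in
lemma key1 (n : ℕ+) : adjoint T1 (T1 (b n)) = if (n : ℕ) % 2 = 1 then b n else 0 := by
  rw [hT1 n]
  by_cases hn : (n : ℕ) % 2 = 1
  · rw [if_pos hn, if_pos hn, adj1 b T1 hT1 n hn]
  · rw [if_neg hn, if_neg hn, map_zero]

include hT2 in
lemma key2 (n : ℕ+) : adjoint T2 (T2 (b n)) = if (n : ℕ) % 2 = 0 then b n else 0 := by
  rw [hT2 n]
  by_cases hn : (n : ℕ) % 2 = 0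
  · rw [if_pos hn, if_pos hn, adj2 b T2 hT2, two_mul_collatz hn]
  · rw [if_neg hn, if_neg hn, map_zero]

include hT1 in
lemma T1_norm : ‖T1‖ ≤ 1 := by
  apply opnorm_le_one
  apply ContinuousLinearMap.ext_on (dense_span' b)
  rintro x ⟨n, rfl⟩
  simp only [comp_apply]
  rw [key1 b T1 hT1 n]
  by_cases hn : (n : ℕ) % 2 = 1
  · rw [if_pos hn, key1 b T1 hT1 n, if_pos hn]
  · rw [if_neg hn, map_zero, map_zero]

include hT2 in
lemma T2_norm : ‖T2‖ ≤ 1 := by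
  apply opnorm_le_one
  apply ContinuousLinearMap.ext_on (dense_span' b)
  rintro x ⟨n, rfl⟩
  simp only [comp_apply]
  rw [key2 b T2 hT2 n]
  by_cases hn : (n : ℕ) % 2 = 0
  · rw [if_pos hn, key2 b T2 hT2 n, if_pos hn]
  · rw [if_neg hn, map_zero, map_zero]

/-- The operator `D = T2 T2 T1`. -/
noncomputable def Dop (T1 T2 : H →L[ℂ] H) : H →L[ℂ] H := T2 * (T2 * T1)

lemma Dop_apply (x : H) : Dop T1 T2 x = T2 (T2 (T1 x)) := rfl

include hT1 hT2 in
lemma Dop_b (n : ℕ+) :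
    Dop T1 T2 (b n) = if (n : ℕ) % 4 = 1 then b (collatz (collatz (collatz n))) else 0 := by
  rw [Dop_apply, hT1 n]
  by_cases h1 : (n : ℕ) % 2 = 1
  · rw [if_pos h1]
    have hc1 : ((3 * n + 1 : ℕ+) : ℕ) = 3 * (n : ℕ) + 1 := coe31 n
    have he : ((3 * n + 1 : ℕ+) : ℕ) % 2 = 0 := by omega
    rw [hT2 (3 * n + 1), if_pos he]
    have hc2 : ((collatz (3 * n + 1) : ℕ+) : ℕ) = (3 * (n : ℕ) + 1) / 2 := by
      rw [collatz_even_coe he, hc1]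
    rw [hT2 (collatz (3 * n + 1))]
    by_cases h4 : (n : ℕ) % 4 = 1
    · rw [if_pos (by omega : ((collatz (3 * n + 1) : ℕ+) : ℕ) % 2 = 0), if_pos h4,
        collatz_odd h1]
    · rw [if_neg (by omega : ¬ ((collatz (3 * n + 1) : ℕ+) : ℕ) % 2 = 0), if_neg h4]
  · rw [if_neg h1, map_zero, map_zero, if_neg (by omega)]

lemma c3_lt (n : ℕ+) (h4 : (n : ℕ) % 4 = 1) (hn : n ≠ 1) :
    ((collatz (collatz (collatz n)) : ℕ+) : ℕ) < (n : ℕ) ∧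
      collatz (collatz (collatz n)) ≠ 1 := by
  have h1 : (n : ℕ) % 2 = 1 := by omega
  have hn2 : (n : ℕ) ≠ 1 := fun h => hn (PNat.coe_injective (by rw [h]; rfl))
  have hpos : (0 : ℕ) < (n : ℕ) := n.2
  have hc1 : ((3 * n + 1 : ℕ+) : ℕ) = 3 * (n : ℕ) + 1 := coe31 n
  have he : ((3 * n + 1 : ℕ+) : ℕ) % 2 = 0 := by omega
  have hc2 : ((collatz (3 * n + 1) : ℕ+) : ℕ) = (3 * (n : ℕ) + 1) / 2 := by
    rw [collatz_even_coe he, hc1]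
  have he2 : ((collatz (3 * n + 1) : ℕ+) : ℕ) % 2 = 0 := by omega
  have hc3 : ((collatz (collatz (3 * n + 1)) : ℕ+) : ℕ) = (3 * (n : ℕ) + 1) / 4 := by
    rw [collatz_even_coe he2]; omega
  rw [collatz_odd h1]
  constructor
  · omega
  · intro h
    have := congrArg PNat.val h
    rw [hc3] at this
    have : (3 * (n : ℕ) + 1) / 4 = 1 := this
    omega

include hT1 hT2 in
lemma Dpow_norm (k : ℕ) (x : H) : ‖((Dop T1 T2) ^ k) x‖ ≤ ‖x‖ := by
  have hb1 : ∀ y : H, ‖T1 y‖ ≤ ‖y‖ := fun y =>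
    (T1.le_opNorm y).trans (by
      have := T1_norm b T1 hT1
      nlinarith [norm_nonneg y])
  have hb2 : ∀ y : H, ‖T2 y‖ ≤ ‖y‖ := fun y =>
    (T2.le_opNorm y).trans (by
      have := T2_norm b T2 hT2
      nlinarith [norm_nonneg y])
  have hD : ∀ y : H, ‖Dop T1 T2 y‖ ≤ ‖y‖ := fun y => by
    rw [Dop_apply]
    exact (hb2 _).trans ((hb2 _).trans (hb1 _))
  induction k generalizing x with
  | zero => rw [pow_zero, ContinuousLinearMap.one_apply]
  | succ k ih =>
    rw [pow_succ, ContinuousLinearMap.mul_apply]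
    exact (ih _).trans (hD x)

include hT1 hT2 in
lemma Dpow_zero_aux : ∀ N : ℕ, ∀ n : ℕ+, (n : ℕ) ≤ N → n ≠ 1 → ∀ k, (n : ℕ) ≤ k →
    ((Dop T1 T2) ^ k) (b n) = 0 := by
  intro N
  induction N with
  | zero => intro n hn; have : (0:ℕ) < (n:ℕ) := n.2; omega
  | succ N ih =>
    intro n hnN hn1 k hk
    have hpos : (0 : ℕ) < (n : ℕ) := n.2
    obtain ⟨j, rfl⟩ : ∃ j, k = j + 1 := ⟨k - 1, by omega⟩
    rw [pow_succ, ContinuousLinearMap.mul_apply, Dop_b b T1 T2 hT1 hT2 n]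
    by_cases h4 : (n : ℕ) % 4 = 1
    · rw [if_pos h4]
      obtain ⟨hlt, hne⟩ := c3_lt n h4 hn1
      exact ih _ (by omega) hne j (by omega)
    · rw [if_neg h4, map_zero]

include hT1 hT2 in
lemma Dpow_zero (n : ℕ+) (hn : n ≠ 1) (k : ℕ) (hk : (n : ℕ) ≤ k) :
    ((Dop T1 T2) ^ k) (b n) = 0 :=
  Dpow_zero_aux b T1 T2 hT1 hT2 (n : ℕ) n le_rfl hn k hk

include hT1 hT2 in
lemma D_one : Dop T1 T2 (b 1) = b 1 := by
  rw [Dop_b b T1 T2 hT1 hT2 1]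
  have h : ((1 : ℕ+) : ℕ) % 4 = 1 := rfl
  rw [if_pos h]
  congr 1

include hT1 hT2 in
lemma Dpow_one (k : ℕ) : ((Dop T1 T2) ^ k) (b 1) = b 1 := by
  induction k with
  | zero => rw [pow_zero, ContinuousLinearMap.one_apply]
  | succ k ih => rw [pow_succ, ContinuousLinearMap.mul_apply, D_one b T1 T2 hT1 hT2, ih]

include hT1 hT2 in
lemma Dadj_one : adjoint (Dop T1 T2) (b 1) = b 1 := by
  have h : adjoint (Dop T1 T2) (b 1)
      = adjoint T1 (adjoint T2 (adjoint T2 (b 1))) := by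
    rw [show Dop T1 T2 = T2 * (T2 * T1) from rfl, ← star_eq_adjoint, star_mul, star_mul]
    rw [ContinuousLinearMap.mul_apply, ContinuousLinearMap.mul_apply]
    simp only [star_eq_adjoint]
  rw [h, adj2 b T2 hT2, adj2 b T2 hT2]
  have h2 : (2 * (2 * 1) : ℕ+) = 3 * 1 + 1 := by decide
  rw [h2, adj1 b T1 hT1 1 rfl]

include hT1 hT2 in
lemma coeff1 (k : ℕ) (z : H) : ⟪b 1, ((Dop T1 T2) ^ k) z⟫ = ⟪b 1, z⟫ := by
  induction k with
  | zero => rw [pow_zero, ContinuousLinearMap.one_apply]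
  | succ k ih =>
    rw [pow_succ', ContinuousLinearMap.mul_apply, ← adjoint_inner_left, Dadj_one b T1 T2 hT1 hT2, ih]

include hT1 hT2 in
lemma smul_b1_mem (M : Submodule ℂ H) (hMc : IsClosed (M : Set H))
    (hD : ∀ x ∈ M, Dop T1 T2 x ∈ M) (z : H) (hz : z ∈ M) :
    (⟪b 1, z⟫ • b 1) ∈ M := by
  have hDk : ∀ k, ((Dop T1 T2) ^ k) z ∈ M := by
    intro k
    induction k with
    | zero => rw [pow_zero, ContinuousLinearMap.one_apply]; exact hz
    | succ k ih => rw [pow_succ', ContinuousLinearMap.mul_apply]; exact hD _ ih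
  have hb1 : ‖(b 1 : H)‖ = 1 := b.orthonormal.1 1
  have hcl : (⟪b 1, z⟫ • b 1) ∈ closure (M : Set H) := by
    rw [Metric.mem_closure_iff]
    intro ε hε
    obtain ⟨w, hwmem, hwd⟩ := Metric.mem_closure_iff.mp (dense_span' b z) (ε / 3)
      (by positivity)
    obtain ⟨c, hc⟩ := Finsupp.mem_span_range_iff_exists_finsupp.mp hwmem
    set N := c.support.sup (fun i => (i : ℕ)) with hN
    refine ⟨((Dop T1 T2) ^ N) z, hDk N, ?_⟩
    have hw1 : ⟪b 1, w⟫ = c 1 := by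
      rw [← hc, Finsupp.sum, inner_sum]
      simp only [inner_smul_right, inner_basis, mul_ite, mul_one, mul_zero]
      rw [Finset.sum_ite_eq c.support 1 (fun i => c i)]
      split_ifs with h
      · rfl
      · rw [Finsupp.notMem_support_iff.mp h]
    have hDw : ((Dop T1 T2) ^ N) w = ⟪b 1, w⟫ • b 1 := by
      rw [← hc, map_finsuppSum, Finsupp.sum]
      have h2 : ∀ i ∈ c.support,
          ((Dop T1 T2) ^ N) (c i • b i) = if i = 1 then c i • b 1 else 0 := by
        intro i hi
        rw [map_smul]
        by_cases h : i = (1 : ℕ+)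
        · subst h; rw [if_pos rfl, Dpow_one b T1 T2 hT1 hT2]
        · rw [if_neg h, Dpow_zero b T1 T2 hT1 hT2 i h N
            (by rw [hN]; exact Finset.le_sup (s := c.support) (f := fun j : ℕ+ => (j : ℕ)) hi), smul_zero]
      rw [Finset.sum_congr rfl h2, Finset.sum_ite_eq' c.support (1 : ℕ+) (fun i => c i • b 1)]
      rw [hc, hw1]
      split_ifs with h
      · rfl
      · rw [Finsupp.notMem_support_iff.mp h, zero_smul]
    have hzw : ‖z - w‖ < ε / 3 := by rw [← dist_eq_norm]; exact hwd
    have hkey : ⟪b 1, z⟫ • b 1 - ((Dop T1 T2) ^ N) z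
        = (⟪b 1, z⟫ • b 1 - ⟪b 1, w⟫ • b 1) + ((Dop T1 T2) ^ N) (w - z) := by
      rw [map_sub, hDw]; abel
    rw [dist_eq_norm, hkey]
    have e1 : ‖⟪b 1, z⟫ • (b 1 : H) - ⟪b 1, w⟫ • b 1‖ ≤ ‖z - w‖ := by
      rw [← sub_smul, ← inner_sub_right, norm_smul, hb1, mul_one]
      calc ‖⟪b 1, z - w⟫‖ ≤ ‖(b 1 : H)‖ * ‖z - w‖ := norm_inner_le_norm _ _
      _ = ‖z - w‖ := by rw [hb1, one_mul]
    have e2 : ‖((Dop T1 T2) ^ N) (w - z)‖ ≤ ‖w - z‖ := Dpow_norm b T1 T2 hT1 hT2 N _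
    have e3 : ‖w - z‖ = ‖z - w‖ := norm_sub_rev w z
    calc ‖(⟪b 1, z⟫ • (b 1 : H) - ⟪b 1, w⟫ • b 1) + ((Dop T1 T2) ^ N) (w - z)‖
        ≤ ‖⟪b 1, z⟫ • (b 1 : H) - ⟪b 1, w⟫ • b 1‖ + ‖((Dop T1 T2) ^ N) (w - z)‖ :=
          norm_add_le _ _
      _ < ε := by rw [e3] at e2; linarith
  rwa [hMc.closure_eq] at hcl

include hT1 hT2 in
lemma reach (M : Submodule ℂ H) (hMT1 : ∀ x ∈ M, T1 x ∈ M) (hMT2 : ∀ x ∈ M, T2 x ∈ M) :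
    ∀ k : ℕ, ∀ n : ℕ+, ∀ x : H, x ∈ M → ⟪b n, x⟫ ≠ 0 → collatz^[k] n = 1 →
      ∃ y ∈ M, ⟪b 1, y⟫ ≠ 0 := by
  intro k
  induction k with
  | zero =>
    intro n x hx hnx h
    rw [Function.iterate_zero_apply] at h
    exact ⟨x, hx, h ▸ hnx⟩
  | succ k ih =>
    intro n x hx hnx h
    rw [Function.iterate_succ_apply] at h
    by_cases hn : (n : ℕ) % 2 = 1
    · refine ih (collatz n) (T1 x) (hMT1 x hx) ?_ h
      rw [collatz_odd hn, ← adjoint_inner_left, adj1 b T1 hT1 n hn]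
      exact hnx
    · have hn0 : (n : ℕ) % 2 = 0 := by omega
      refine ih (collatz n) (T2 x) (hMT2 x hx) ?_ h
      rw [← adjoint_inner_left, adj2 b T2 hT2, two_mul_collatz hn0]
      exact hnx

include hT1 hT2 in
lemma all_b_mem (M : Submodule ℂ H) (hA1 : ∀ x ∈ M, adjoint T1 x ∈ M)
    (hA2 : ∀ x ∈ M, adjoint T2 x ∈ M) (h1M : b 1 ∈ M) :
    ∀ k : ℕ, ∀ n : ℕ+, collatz^[k] n = 1 → b n ∈ M := by
  intro k
  induction k with
  | zero =>
    intro n h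
    rw [Function.iterate_zero_apply] at h
    rw [h]; exact h1M
  | succ k ih =>
    intro n h
    rw [Function.iterate_succ_apply] at h
    have hc := ih (collatz n) h
    by_cases hn : (n : ℕ) % 2 = 1
    · rw [collatz_odd hn] at hc
      have := hA1 _ hc
      rwa [adj1 b T1 hT1 n hn] at this
    · have hn0 : (n : ℕ) % 2 = 0 := by omega
      have := hA2 _ hc
      rwa [adj2 b T2 hT2, two_mul_collatz hn0] at this

end CollatzAux

open CollatzAux ContinuousLinearMap in
/-- If the Collatz conjecture holds, `C*(T₁,T₂)` has no non-trivial reducing subspaces. -/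
theorem irreducible_pair_of_collatz {H : Type*} [NormedAddCommGroup H] [InnerProductSpace ℂ H]
    [CompleteSpace H] (b : HilbertBasis ℕ+ ℂ H)
    (T1 T2 : H →L[ℂ] H)
    (hT1 : ∀ n : ℕ+, T1 (b n) = if (n : ℕ) % 2 = 1 then b (3 * n + 1) else 0)
    (hT2 : ∀ n : ℕ+, T2 (b n) = if (n : ℕ) % 2 = 0 then b (collatz n) else 0)
    (hcollatz : ∀ m : ℕ+, (1 : ℕ+) ∈ orbit collatz m) :
    ∀ M : Submodule ℂ H, IsClosed (M : Set H) →
      (∀ A ∈ CstarGen {T1, T2}, ∀ x ∈ M, A x ∈ M ∧ ContinuousLinearMap.adjoint A x ∈ M) →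
      M = ⊥ ∨ M = ⊤ := by
  intro M hMc hM
  have memT1 : T1 ∈ CstarGen {T1, T2} :=
    subset_closure (NonUnitalStarAlgebra.subset_adjoin ℂ _ (Set.mem_insert _ _))
  have memT2 : T2 ∈ CstarGen {T1, T2} :=
    subset_closure (NonUnitalStarAlgebra.subset_adjoin ℂ _ (Set.mem_insert_of_mem _ rfl))
  have hMT1 : ∀ x ∈ M, T1 x ∈ M := fun x hx => (hM T1 memT1 x hx).1
  have hMT2 : ∀ x ∈ M, T2 x ∈ M := fun x hx => (hM T2 memT2 x hx).1
  have hMA1 : ∀ x ∈ M, adjoint T1 x ∈ M := fun x hx => (hM T1 memT1 x hx).2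
  have hMA2 : ∀ x ∈ M, adjoint T2 x ∈ M := fun x hx => (hM T2 memT2 x hx).2
  by_cases hbot : M = ⊥
  · exact Or.inl hbot
  right
  obtain ⟨x, hxM, hx0⟩ := (Submodule.ne_bot_iff M).mp hbot
  have hex : ∃ n : ℕ+, (inner ℂ (b n) x : ℂ) ≠ 0 := by
    by_contra hcon
    push_neg at hcon
    exact hx0 (basis_ext b (fun i => by rw [hcon i, inner_zero_right]))
  obtain ⟨n, hn⟩ := hex
  obtain ⟨k, hk⟩ := hcollatz n
  obtain ⟨y, hyM, hy1⟩ := reach b T1 T2 hT1 hT2 M hMT1 hMT2 k n x hxM hn hk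
  have hDmem : ∀ w ∈ M, Dop T1 T2 w ∈ M := fun w hw =>
    hMT2 _ (hMT2 _ (hMT1 _ hw))
  have hsm := smul_b1_mem b T1 T2 hT1 hT2 M hMc hDmem y hyM
  have hb1M : (b 1 : H) ∈ M := by
    have := M.smul_mem (inner ℂ (b 1) y : ℂ)⁻¹ hsm
    rwa [smul_smul, inv_mul_cancel₀ hy1, one_smul] at this
  have hall : ∀ m : ℕ+, b m ∈ M := by
    intro m
    obtain ⟨k, hk⟩ := hcollatz m
    exact all_b_mem b T1 T2 hT1 hT2 M hMA1 hMA2 hb1M k m hk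
  rw [eq_top_iff]
  intro v _
  have hspan : Submodule.span ℂ (Set.range ⇑b) ≤ M :=
    Submodule.span_le.mpr (by rintro _ ⟨m, rfl⟩; exact hall m)
  have hv : v ∈ closure (↑(Submodule.span ℂ (Set.range ⇑b)) : Set H) := dense_span' b v
  have hvc : v ∈ closure (M : Set H) := closure_mono (fun a ha => hspan ha) hv
  rwa [hMc.closure_eq] at hvc
end

section
/- Let f be the Collatz map, N1 = {n ∈ ℕ≥1 : n ≡ 1 or 5 (mod 6)}, N2 = {n ∈ ℕ≥1 : n ≡ 4 or 16 (mod 18)}, and P the first-return map of f on N1 ∪ N2 (which is defined on all of N1 ∪ N2). Then the restrictions P|_{N1} and P|_{N2} are injective, P(N1) = N2, and P(N2) = N1 ∪ N2. -/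
/-- `N₁ = {n : n ≡ 1, 5 (mod 6)}`. -/
def N1 : Set ℕ+ := {n : ℕ+ | (n : ℕ) % 6 = 1 ∨ (n : ℕ) % 6 = 5}

/-- `N₂ = {n : n ≡ 4, 16 (mod 18)}`. -/
def N2 : Set ℕ+ := {n : ℕ+ | (n : ℕ) % 18 = 4 ∨ (n : ℕ) % 18 = 16}

/-- `y` is the first return of `x` to `S` under iteration of `f`: for some `k ≥ 1`,
`y = f^[k] x ∈ S` and no earlier positive iterate of `x` lies in `S`. -/
def IsFirstReturn {X : Type*} (f : X → X) (S : Set X) (x y : X) : Prop :=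
  ∃ k : ℕ, 0 < k ∧ f^[k] x ∈ S ∧ y = f^[k] x ∧ ∀ j : ℕ, 0 < j → j < k → f^[j] x ∉ S

lemma collatz_val (n : ℕ+) :
    (collatz n : ℕ) = if (n : ℕ) % 2 = 1 then 3 * (n : ℕ) + 1 else (n : ℕ) / 2 := by
  by_cases h : (n : ℕ) % 2 = 1
  · rw [if_pos h]; unfold collatz; simp only [h, ↓reduceDIte]; push_cast; ring
  · rw [if_neg h]; unfold collatz; simp only [h, ↓reduceDIte]; exact PNat.mk_coe _ _

lemma mem_N1 (n : ℕ+) : n ∈ N1 ↔ ((n : ℕ) % 6 = 1 ∨ (n : ℕ) % 6 = 5) := Iff.rfl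

lemma mem_N2 (n : ℕ+) : n ∈ N2 ↔ ((n : ℕ) % 18 = 4 ∨ (n : ℕ) % 18 = 16) := Iff.rfl

lemma N2_not_N1 {n : ℕ+} (h : n ∈ N2) : n ∉ N1 := by
  rw [mem_N2] at h; rw [mem_N1]; omega

lemma N2_coprime3 {n : ℕ+} (h : n ∈ N2) : (n : ℕ) % 3 ≠ 0 := by
  rw [mem_N2] at h; omega

lemma collatz_coprime3 {n : ℕ+} (h : (n : ℕ) % 3 ≠ 0) : (collatz n : ℕ) % 3 ≠ 0 := by
  rw [collatz_val]
  split <;> omega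

lemma iterate_coprime3 {x : ℕ+} (h : (x : ℕ) % 3 ≠ 0) (j : ℕ) :
    ((collatz^[j] x : ℕ+) : ℕ) % 3 ≠ 0 := by
  induction j with
  | zero => simpa using h
  | succ j ih =>
    rw [Function.iterate_succ_apply']
    exact collatz_coprime3 ih

/-- Two points coprime to 3 and outside `N1` with the same Collatz image are equal. -/
lemma mergeEven {u v : ℕ+} (hu3 : (u : ℕ) % 3 ≠ 0) (hv3 : (v : ℕ) % 3 ≠ 0)
    (hu1 : u ∉ N1) (hv1 : v ∉ N1) (h : collatz u = collatz v) : u = v := by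
  rw [mem_N1] at hu1 hv1
  have hu2 : (u : ℕ) % 2 = 0 := by
    by_contra h2
    exact hu1 (by omega)
  have hv2 : (v : ℕ) % 2 = 0 := by
    by_contra h2
    exact hv1 (by omega)
  have hval : (collatz u : ℕ) = (collatz v : ℕ) := congrArg (fun t : ℕ+ => (t : ℕ)) h
  rw [collatz_val, collatz_val] at hval
  rw [if_neg (by omega), if_neg (by omega)] at hval
  have hu0 : 0 < (u : ℕ) := u.pos
  have hv0 : 0 < (v : ℕ) := v.pos
  exact PNat.coe_injective (by omega)

lemma isFirstReturn_unique {X : Type*} {f : X → X} {S : Set X} {x y y' : X}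
    (h : IsFirstReturn f S x y) (h' : IsFirstReturn f S x y') : y = y' := by
  obtain ⟨k, hk, hkS, hky, hkmin⟩ := h
  obtain ⟨k', hk', hkS', hky', hkmin'⟩ := h'
  rcases lt_trichotomy k k' with hlt | heq | hgt
  · exact absurd hkS (hkmin' k hk hlt)
  · rw [hky, hky', heq]
  · exact absurd hkS' (hkmin k' hk' hgt)

lemma collatz_N1_mem_N2 {x : ℕ+} (hx : x ∈ N1) : collatz x ∈ N2 := by
  rw [mem_N1] at hx
  rw [mem_N2, collatz_val, if_pos (by omega)]
  omega

lemma isFirstReturn_N1 {x : ℕ+} (hx : x ∈ N1) :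
    IsFirstReturn collatz (N1 ∪ N2) x (collatz x) := by
  refine ⟨1, one_pos, ?_, by simp, fun j hj hj1 => by omega⟩
  simpa using Or.inr (collatz_N1_mem_N2 hx)

lemma P_eq_on_N1 {P : ℕ+ → ℕ+}
    (hP : ∀ x ∈ N1 ∪ N2, IsFirstReturn collatz (N1 ∪ N2) x (P x))
    {x : ℕ+} (hx : x ∈ N1) : P x = collatz x :=
  isFirstReturn_unique (hP x (Or.inl hx)) (isFirstReturn_N1 hx)

/-- Injectivity auxiliary: two first-return journeys from `N2` ending at the same point
coincide (case `k ≤ m`). -/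
lemma inj_aux {x y : ℕ+} (hx : x ∈ N2) (hy : y ∈ N2)
    {k m : ℕ} (hk : 0 < k) (_hm : 0 < m)
    (hxi : ∀ j : ℕ, 0 < j → j < k → collatz^[j] x ∉ N1 ∪ N2)
    (hyi : ∀ j : ℕ, 0 < j → j < m → collatz^[j] y ∉ N1 ∪ N2)
    (hkm : k ≤ m) (heq : collatz^[k] x = collatz^[m] y) : x = y := by
  have key : ∀ j, j ≤ k → collatz^[k - j] x = collatz^[m - j] y := by
    intro j
    induction j with
    | zero => intro _; simpa using heq
    | succ j ih =>
      intro hj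
      have h1 := ih (by omega)
      have e1 : k - j = (k - (j + 1)) + 1 := by omega
      have e2 : m - j = (m - (j + 1)) + 1 := by omega
      rw [e1, e2, Function.iterate_succ_apply', Function.iterate_succ_apply'] at h1
      have hu3 : ((collatz^[k - (j+1)] x : ℕ+) : ℕ) % 3 ≠ 0 :=
        iterate_coprime3 (N2_coprime3 hx) _
      have hv3 : ((collatz^[m - (j+1)] y : ℕ+) : ℕ) % 3 ≠ 0 :=
        iterate_coprime3 (N2_coprime3 hy) _
      have hu1 : collatz^[k - (j+1)] x ∉ N1 := by
        rcases Nat.eq_zero_or_pos (k - (j+1)) with h0 | h0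
        · rw [h0]; simpa using N2_not_N1 hx
        · intro hmem
          exact hxi _ h0 (by omega) (Or.inl hmem)
      have hv1 : collatz^[m - (j+1)] y ∉ N1 := by
        rcases Nat.eq_zero_or_pos (m - (j+1)) with h0 | h0
        · rw [h0]; simpa using N2_not_N1 hy
        · intro hmem
          exact hyi _ h0 (by omega) (Or.inl hmem)
      exact mergeEven hu3 hv3 hu1 hv1 h1
  have hfin := key k le_rfl
  simp only [Nat.sub_self, Function.iterate_zero, id_eq] at hfin
  rcases eq_or_lt_of_le hkm with hEq | hLt
  · rw [← hEq, Nat.sub_self] at hfin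
    simpa using hfin
  · exfalso
    exact hyi (m - k) (by omega) (by omega) (by rw [← hfin]; exact Or.inr hx)

lemma exists_pow_mod9 (z : ℕ) (h3 : z % 3 ≠ 0) :
    ∃ k : ℕ, 0 < k ∧ ((2 ^ k * z) % 9 = 4 ∨ (2 ^ k * z) % 9 = 7) := by
  have hz : z % 9 = 1 ∨ z % 9 = 2 ∨ z % 9 = 4 ∨ z % 9 = 5 ∨ z % 9 = 7 ∨ z % 9 = 8 := by
    omega
  rcases hz with h | h | h | h | h | h
  · refine ⟨2, by norm_num, ?_⟩; norm_num; omega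
  · refine ⟨1, by norm_num, ?_⟩; norm_num; omega
  · refine ⟨2, by norm_num, ?_⟩; norm_num; omega
  · refine ⟨3, by norm_num, ?_⟩; norm_num; omega
  · refine ⟨4, by norm_num, ?_⟩; norm_num; omega
  · refine ⟨1, by norm_num, ?_⟩; norm_num; omega

lemma pow2_mul_even {k : ℕ} (hk : 0 < k) (z : ℕ) : (2 ^ k * z) % 2 = 0 := by
  obtain ⟨j, rfl⟩ : ∃ j, k = j + 1 := ⟨k - 1, by omega⟩
  have h : 2 ^ (j + 1) * z = 2 * (2 ^ j * z) := by ring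
  omega

/-- Every element of `N1 ∪ N2` is hit as a first return from some element of `N2`. -/
lemma surj_aux {z : ℕ+} (hz : z ∈ N1 ∪ N2) :
    ∃ x : ℕ+, x ∈ N2 ∧ IsFirstReturn collatz (N1 ∪ N2) x z := by
  have hz3 : (z : ℕ) % 3 ≠ 0 := by
    rcases hz with h | h
    · rw [mem_N1] at h; omega
    · exact N2_coprime3 h
  have hz0 : 0 < (z : ℕ) := z.pos
  classical
  have hexQ : ∃ k : ℕ, 0 < k ∧ ((2 ^ k * (z : ℕ)) % 18 = 4 ∨ (2 ^ k * (z : ℕ)) % 18 = 16) := by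
    obtain ⟨k, hk, h9⟩ := exists_pow_mod9 (z : ℕ) hz3
    have h2 := pow2_mul_even hk (z : ℕ)
    exact ⟨k, hk, by omega⟩
  set k0 := Nat.find hexQ with hk0def
  have hQk0 := Nat.find_spec hexQ
  have hk0pos : 0 < k0 := hQk0.1
  have hmin := fun j (hj : j < k0) => Nat.find_min hexQ hj
  set x : ℕ+ := ⟨2 ^ k0 * (z : ℕ), by positivity⟩ with hxdef
  have hxval : (x : ℕ) = 2 ^ k0 * (z : ℕ) := rfl
  have hxN2 : x ∈ N2 := by
    rw [mem_N2, hxval]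
    exact hQk0.2
  -- iterates of x are 2^(k0-j) * z
  have hiter : ∀ j, j ≤ k0 → ((collatz^[j] x : ℕ+) : ℕ) = 2 ^ (k0 - j) * (z : ℕ) := by
    intro j
    induction j with
    | zero => intro _; simpa using hxval
    | succ j ih =>
      intro hj
      have h1 := ih (by omega)
      rw [Function.iterate_succ_apply', collatz_val, h1]
      have hpos : 0 < k0 - j := by omega
      have heven : (2 ^ (k0 - j) * (z : ℕ)) % 2 = 0 := pow2_mul_even hpos (z : ℕ)
      rw [if_neg (by omega)]
      have hsplit : 2 ^ (k0 - j) * (z : ℕ) = 2 * (2 ^ (k0 - (j+1)) * (z : ℕ)) := by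
        have h2 : k0 - j = (k0 - (j + 1)) + 1 := by omega
        rw [h2]; ring
      omega
  have hlast : collatz^[k0] x = z := by
    apply PNat.coe_injective
    rw [hiter k0 le_rfl]
    simp
  refine ⟨x, hxN2, k0, hk0pos, ?_, hlast.symm, ?_⟩
  · rw [hlast]; exact hz
  · intro j hj hjk
    have hval : ((collatz^[j] x : ℕ+) : ℕ) = 2 ^ (k0 - j) * (z : ℕ) := hiter j (by omega)
    have hpos : 0 < k0 - j := by omega
    have heven : ((collatz^[j] x : ℕ+) : ℕ) % 2 = 0 := by
      rw [hval]; exact pow2_mul_even hpos (z : ℕ)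
    intro hmem
    rcases hmem with h | h
    · rw [mem_N1] at h; omega
    · rw [mem_N2, hval] at h
      exact hmin (k0 - j) (by omega) ⟨hpos, h⟩

/-- The first-return map `P` of the Collatz map on `N₁ ∪ N₂` is injective on `N₁` and on
`N₂`, with `P(N₁) = N₂` and `P(N₂) = N₁ ∪ N₂`. -/
theorem firstReturn_inj_surj (P : ℕ+ → ℕ+)
    (hP : ∀ x ∈ N1 ∪ N2, IsFirstReturn collatz (N1 ∪ N2) x (P x)) :
    Set.InjOn P N1 ∧ Set.InjOn P N2 ∧ P '' N1 = N2 ∧ P '' N2 = N1 ∪ N2 := by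
  refine ⟨?_, ?_, ?_, ?_⟩
  · -- InjOn P N1 : P x = collatz x = 3x+1
    intro a ha b hb hab
    rw [P_eq_on_N1 hP ha, P_eq_on_N1 hP hb] at hab
    have hval : (collatz a : ℕ) = (collatz b : ℕ) := congrArg _ hab
    rw [mem_N1] at ha hb
    rw [collatz_val, collatz_val, if_pos (by omega), if_pos (by omega)] at hval
    exact PNat.coe_injective (by omega)
  · -- InjOn P N2
    intro a ha b hb hab
    obtain ⟨k, hk, hkS, hky, hkmin⟩ := hP a (Or.inr ha)
    obtain ⟨m, hm, hmS, hmy, hmmin⟩ := hP b (Or.inr hb)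
    have heq : collatz^[k] a = collatz^[m] b := by rw [← hky, ← hmy, hab]
    rcases le_or_gt k m with hkm | hkm
    · exact inj_aux ha hb hk hm hkmin hmmin hkm heq
    · exact (inj_aux hb ha hm hk hmmin hkmin (le_of_lt hkm) heq.symm).symm
  · -- P '' N1 = N2
    ext n
    constructor
    · rintro ⟨a, ha, rfl⟩
      rw [P_eq_on_N1 hP ha]
      exact collatz_N1_mem_N2 ha
    · intro hn
      rw [mem_N2] at hn
      have hn0 : 0 < (n : ℕ) := n.pos
      have hn4 : 4 ≤ (n : ℕ) := by omega
      have hp : 0 < ((n : ℕ) - 1) / 3 := by omega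
      have haN1 : (⟨((n : ℕ) - 1) / 3, hp⟩ : ℕ+) ∈ N1 := by
        show (((n : ℕ) - 1) / 3) % 6 = 1 ∨ (((n : ℕ) - 1) / 3) % 6 = 5
        omega
      refine ⟨_, haN1, ?_⟩
      rw [P_eq_on_N1 hP haN1]
      apply PNat.coe_injective
      rw [collatz_val (⟨_, hp⟩ : ℕ+)]
      show (if (((n : ℕ) - 1) / 3) % 2 = 1 then 3 * (((n : ℕ) - 1) / 3) + 1
        else (((n : ℕ) - 1) / 3) / 2) = (n : ℕ)
      rw [if_pos (by omega)]
      omega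
  · -- P '' N2 = N1 ∪ N2
    ext z
    constructor
    · rintro ⟨a, ha, rfl⟩
      obtain ⟨k, hk, hkS, hky, hkmin⟩ := hP a (Or.inr ha)
      rw [hky]; exact hkS
    · intro hz
      obtain ⟨x, hxN2, hfr⟩ := surj_aux hz
      exact ⟨x, hxN2, isFirstReturn_unique (hP x (Or.inr hxN2)) hfr⟩
end

section
/- Let f be the Collatz map, N1 = {n ∈ ℕ≥1 : n ≡ 1 or 5 (mod 6)}, N2 = {n ∈ ℕ≥1 : n ≡ 4 or 16 (mod 18)}, and P the first-return map of f on N1 ∪ N2. Then the Collatz conjecture holds if and only if 1 ∈ orb(n;P) for every n ∈ N1 ∪ N2. -/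
lemma collatz_coe_odd (n : ℕ+) (h : (n:ℕ) % 2 = 1) : (collatz n : ℕ) = 3 * n + 1 := by
  have e : collatz n = 3 * n + 1 := dif_pos h
  rw [e]; push_cast; ring

lemma collatz_coe_even (n : ℕ+) (h : (n:ℕ) % 2 = 0) : (collatz n : ℕ) = (n:ℕ) / 2 := by
  have e : collatz n = ⟨(n : ℕ) / 2, by have h2 : 0 < n.1 := n.2; have h3 : n.1 % 2 = 0 := h; show 0 < n.1 / 2; omega⟩ := dif_neg (by omega)
  rw [e]
  rfl

lemma mem_union_iff (n : ℕ+) :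
    n ∈ N1 ∪ N2 ↔ ((n:ℕ) % 6 = 1 ∨ (n:ℕ) % 6 = 5) ∨ ((n:ℕ) % 18 = 4 ∨ (n:ℕ) % 18 = 16) :=
  Iff.rfl

lemma enters : ∀ v : ℕ, ∀ n : ℕ+, n.1 ≤ v → ∃ m, collatz^[m] n ∈ N1 ∪ N2 := by
  intro v
  induction v with
  | zero => intro n h; exact absurd h (by have := n.2; omega)
  | succ v ih =>
    intro n hn
    by_cases h2 : (n:ℕ) % 2 = 1
    · by_cases h3 : (n:ℕ) % 3 = 0
      · -- n odd, divisible by 3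
        set a := collatz n with ha
        have ha' : (a:ℕ) = 3 * n + 1 := collatz_coe_odd n h2
        have ha18 : (a:ℕ) % 18 = 10 := by omega
        set b := collatz a with hb
        have hb' : (b:ℕ) = (a:ℕ) / 2 := collatz_coe_even a (by omega)
        have hb9 : (b:ℕ) % 9 = 5 := by omega
        have : (b:ℕ) % 18 = 5 ∨ (b:ℕ) % 18 = 14 := by omega
        rcases this with h | h
        · refine ⟨2, ?_⟩
          have h2' : collatz^[2] n = b := rfl
          rw [h2', mem_union_iff]; omega
        · set c := collatz b with hc
          have hc' : (c:ℕ) = (b:ℕ) / 2 := collatz_coe_even b (by omega)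
          have : (c:ℕ) % 9 = 7 := by omega
          refine ⟨3, ?_⟩
          have h3' : collatz^[3] n = c := rfl
          rw [h3', mem_union_iff]; omega
      · exact ⟨0, by rw [Function.iterate_zero_apply, mem_union_iff]; omega⟩
    · have hc : (collatz n).1 = n.1 / 2 := collatz_coe_even n (by omega)
      obtain ⟨m, hm⟩ := ih (collatz n) (by have := n.2; have := (collatz n).2; omega)
      exact ⟨m + 1, by rw [Function.iterate_succ_apply]; exact hm⟩

lemma P_hits (P : ℕ+ → ℕ+)
    (hP : ∀ x ∈ N1 ∪ N2, IsFirstReturn collatz (N1 ∪ N2) x (P x)) :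
    ∀ m, ∀ x ∈ N1 ∪ N2, collatz^[m] x ∈ N1 ∪ N2 → ∃ j, P^[j] x = collatz^[m] x := by
  intro m
  induction m using Nat.strong_induction_on with
  | _ m ih =>
    intro x hx hm
    rcases Nat.eq_zero_or_pos m with h0 | hpos
    · subst h0; exact ⟨0, rfl⟩
    · obtain ⟨k, hk0, hkS, hPx, hmin⟩ := hP x hx
      have hkm : k ≤ m := by
        by_contra h
        exact hmin m hpos (by omega) hm
      have heq : collatz^[m - k] (P x) = collatz^[m] x := by
        rw [hPx, ← Function.iterate_add_apply]
        congr 1; omega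
      obtain ⟨j, hj⟩ := ih (m - k) (by omega) (P x) (by rw [hPx]; exact hkS)
        (by rw [heq]; exact hm)
      exact ⟨j + 1, by rw [Function.iterate_succ_apply, hj, heq]⟩

lemma P_sub (P : ℕ+ → ℕ+)
    (hP : ∀ x ∈ N1 ∪ N2, IsFirstReturn collatz (N1 ∪ N2) x (P x)) :
    ∀ j, ∀ x ∈ N1 ∪ N2, P^[j] x ∈ N1 ∪ N2 ∧ ∃ m, P^[j] x = collatz^[m] x := by
  intro j
  induction j with
  | zero => exact fun x hx => ⟨hx, 0, rfl⟩
  | succ j ih =>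
    intro x hx
    obtain ⟨hS, m, hm⟩ := ih x hx
    obtain ⟨k, hk0, hkS, hPx, hmin⟩ := hP _ hS
    rw [Function.iterate_succ_apply']
    refine ⟨by rw [hPx]; exact hkS, k + m, ?_⟩
    rw [hPx, hm, ← Function.iterate_add_apply]

/-- The Collatz conjecture holds iff `1 ∈ orb(n;P)` for every `n ∈ N₁ ∪ N₂`, where `P` is
the first-return map of the Collatz map on `N₁ ∪ N₂`. -/
theorem collatz_iff_firstReturn_orbit (P : ℕ+ → ℕ+)
    (hP : ∀ x ∈ N1 ∪ N2, IsFirstReturn collatz (N1 ∪ N2) x (P x)) :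
    (∀ n : ℕ+, (1 : ℕ+) ∈ orbit collatz n) ↔ ∀ n ∈ N1 ∪ N2, (1 : ℕ+) ∈ orbit P n := by
  constructor
  · intro h n hn
    obtain ⟨m, hm⟩ := h n
    replace hm : collatz^[m] n = 1 := hm
    have h1S : (1 : ℕ+) ∈ N1 ∪ N2 := by rw [mem_union_iff]; left; left; rfl
    obtain ⟨j, hj⟩ := P_hits P hP m n hn (by rw [hm]; exact h1S)
    exact ⟨j, show P^[j] n = 1 by rw [hj, hm]⟩
  · intro h n
    obtain ⟨m, hm⟩ := enters n.1 n le_rfl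
    obtain ⟨j, hj⟩ := h _ hm
    replace hj : P^[j] (collatz^[m] n) = 1 := hj
    obtain ⟨_, m', hm'⟩ := P_sub P hP j _ hm
    exact ⟨m' + m, show collatz^[m' + m] n = 1 by
      rw [Function.iterate_add_apply, ← hm', hj]⟩
end
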